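/- Let (X_n)_{n≥1} be a sequence of i.i.d. random variables with expectation μ, satisfying 0 ≤ X_n ≤ B almost surely for some constant B > 0. Then for every δ ∈ (0,1), with probability at least 1 − δ, simultaneously for all n ≥ 1 it holds that |∑_{i=1}^n (X_i − μ)| ≤ 2·√(B·(∑_{i=1}^n X_i)·log(2n/δ)) + 7·B·log(2n/δ). -/

import Mathlib

open MeasureTheory ProbabilityTheory Finset

section AnytimeBernsteinAux

open Real

lemma two_mul_three_pow_le_factorial (n : ℕ) : 2 * 3 ^ n ≤ (n + 2).factorial := by
  induction n with
  | zero => simp [Nat.factorial]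
  | succ k ih =>
    have : (k + 3).factorial = (k + 3) * (k + 2).factorial := rfl
    calc 2 * 3 ^ (k + 1) = 3 * (2 * 3 ^ k) := by ring
    _ ≤ 3 * (k + 2).factorial := by omega
    _ ≤ (k + 3) * (k + 2).factorial := by
        have := (k + 2).factorial_pos
        exact Nat.mul_le_mul_right _ (by omega)
    _ = (k + 3).factorial := rfl

lemma exp_series (u : ℝ) : Real.exp u = ∑' n : ℕ, u ^ n / n.factorial := by
  rw [Real.exp_eq_exp_ℝ, NormedSpace.exp_eq_tsum_div]

lemma exp_sub_series (u : ℝ) : Real.exp u - 1 - u = ∑' n : ℕ, u ^ (n + 2) / (n + 2).factorial := by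
  have hs : Summable (fun n : ℕ => u ^ n / n.factorial) := Real.summable_pow_div_factorial u
  have h1 : ∑' n : ℕ, u ^ n / n.factorial
      = u ^ 0 / Nat.factorial 0 + ∑' n : ℕ, u ^ (n + 1) / (n + 1).factorial :=
    Summable.tsum_eq_zero_add hs
  have h2 : ∑' n : ℕ, u ^ (n + 1) / (n + 1).factorial
      = u ^ 1 / Nat.factorial 1 + ∑' n : ℕ, u ^ (n + 2) / (n + 2).factorial :=
    Summable.tsum_eq_zero_add ((summable_nat_add_iff 1).2 hs)
  rw [exp_series, h1, h2]
  simp [Nat.factorial]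

lemma summable_shift (u : ℝ) : Summable (fun n : ℕ => u ^ (n + 2) / (n + 2).factorial) :=
  (summable_nat_add_iff 2).2 (Real.summable_pow_div_factorial u)

lemma exp_quad_bound {u : ℝ} (h0 : 0 ≤ u) (h3 : u < 3) :
    Real.exp u - 1 - u ≤ u ^ 2 / (2 * (1 - u / 3)) := by
  have hu3 : u / 3 < 1 := by linarith
  have hu3' : 0 ≤ u / 3 := by linarith
  have hgeo : Summable (fun n : ℕ => u ^ 2 / 2 * (u / 3) ^ n) :=
    (summable_geometric_of_lt_one hu3' hu3).mul_left _
  have hterm : ∀ n : ℕ, u ^ (n + 2) / (n + 2).factorial ≤ u ^ 2 / 2 * (u / 3) ^ n := by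
    intro n
    have h1 : u ^ (n + 2) = u ^ 2 * u ^ n := by ring
    have h2 : u ^ 2 / 2 * (u / 3) ^ n = u ^ 2 * u ^ n / (2 * 3 ^ n) := by
      rw [div_pow]; ring
    rw [h1, h2]
    apply div_le_div_of_nonneg_left ?_ ?_ ?_
    · positivity
    · positivity
    · exact_mod_cast two_mul_three_pow_le_factorial n
  calc Real.exp u - 1 - u = ∑' n : ℕ, u ^ (n + 2) / (n + 2).factorial := exp_sub_series u
    _ ≤ ∑' n : ℕ, u ^ 2 / 2 * (u / 3) ^ n := Summable.tsum_le_tsum hterm (summable_shift u) hgeo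
    _ = u ^ 2 / 2 * (1 - u / 3)⁻¹ := by
        rw [tsum_mul_left, tsum_geometric_of_lt_one hu3' hu3]
    _ = u ^ 2 / (2 * (1 - u / 3)) := by
        rw [div_mul_eq_mul_div, mul_comm]
        field_simp

lemma exp_neg_quad_bound {u : ℝ} (h0 : 0 ≤ u) (h3 : u < 3) :
    Real.exp (-u) - 1 + u ≤ u ^ 2 / (2 * (1 - u / 3)) := by
  have h1 : Real.exp (-u) - 1 + u = ∑' n : ℕ, (-u) ^ (n + 2) / (n + 2).factorial := by
    have := exp_sub_series (-u); linarith
  have hterm : ∀ n : ℕ, (-u) ^ (n + 2) / (n + 2).factorial ≤ u ^ (n + 2) / (n + 2).factorial := by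
    intro n
    have h2 : (-u) ^ (n + 2) ≤ u ^ (n + 2) := by
      calc (-u) ^ (n + 2) ≤ |(-u) ^ (n + 2)| := le_abs_self _
        _ = |u| ^ (n + 2) := by rw [abs_pow, abs_neg]
        _ = u ^ (n + 2) := by rw [abs_of_nonneg h0]
    exact div_le_div_of_nonneg_right h2 (by positivity) |>.trans_eq rfl
  calc Real.exp (-u) - 1 + u = ∑' n : ℕ, (-u) ^ (n + 2) / (n + 2).factorial := h1
    _ ≤ ∑' n : ℕ, u ^ (n + 2) / (n + 2).factorial :=
        Summable.tsum_le_tsum hterm (summable_shift (-u)) (summable_shift u)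
    _ ≤ u ^ 2 / (2 * (1 - u / 3)) := by
        have := exp_quad_bound h0 h3; linarith [exp_sub_series u]

variable {Ω : Type*} {m0 : MeasurableSpace Ω} {μ : Measure Ω} [IsProbabilityMeasure μ]

lemma chord_exp {B : ℝ} (hB : 0 < B) {x : ℝ} (hx : x ∈ Set.Icc (0:ℝ) B) (l : ℝ) :
    Real.exp (l * x) ≤ 1 + x / B * (Real.exp (l * B) - 1) := by
  obtain ⟨hx0, hxB⟩ := hx
  have hb0 : (0:ℝ) ≤ x / B := by positivity
  have hb1 : x / B ≤ 1 := (div_le_one hB).2 hxB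
  have h := convexOn_exp.2 (Set.mem_univ (0:ℝ)) (Set.mem_univ (l * B))
    (by linarith : (0:ℝ) ≤ 1 - x / B) hb0 (by ring)
  simp only [smul_eq_mul, mul_zero, Real.exp_zero] at h
  have hxe : 0 + x / B * (l * B) = l * x := by
    field_simp; ring
  rw [hxe] at h
  linarith

lemma bernstein_mgf_single {X : Ω → ℝ} {B m : ℝ} (hB : 0 < B)
    (hXm : Measurable X) (hmean : ∫ ω, X ω ∂μ = m)
    (hbdd : ∀ᵐ ω ∂μ, X ω ∈ Set.Icc (0 : ℝ) B) (l : ℝ) :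
    mgf X μ l ≤ Real.exp (m / B * (Real.exp (l * B) - 1)) := by
  have hXint : Integrable X μ := by
    refine Integrable.mono' (integrable_const B) hXm.aestronglyMeasurable ?_
    filter_upwards [hbdd] with ω hω
    rw [Real.norm_eq_abs, abs_of_nonneg hω.1]; exact hω.2
  have hexp_int : Integrable (fun ω => Real.exp (l * X ω)) μ := by
    refine Integrable.mono' (integrable_const (Real.exp (|l| * B)))
      (hXm.const_mul l).exp.aestronglyMeasurable ?_
    filter_upwards [hbdd] with ω hω
    rw [Real.norm_eq_abs, abs_of_nonneg (Real.exp_pos _).le, Real.exp_le_exp]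
    calc l * X ω ≤ |l| * X ω := mul_le_mul_of_nonneg_right (le_abs_self l) hω.1
      _ ≤ |l| * B := mul_le_mul_of_nonneg_left hω.2 (abs_nonneg l)
  have h1 : mgf X μ l ≤ ∫ ω, (1 + X ω / B * (Real.exp (l * B) - 1)) ∂μ := by
    refine integral_mono_ae hexp_int ?_ ?_
    · exact (integrable_const 1).add ((hXint.div_const B).mul_const _)
    · filter_upwards [hbdd] with ω hω
      exact chord_exp hB hω l
  have h2 : ∫ ω, (1 + X ω / B * (Real.exp (l * B) - 1)) ∂μ
      = 1 + m / B * (Real.exp (l * B) - 1) := by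
    rw [integral_add (integrable_const 1) ((hXint.div_const B).mul_const _),
      integral_const, integral_mul_const, integral_div, hmean]
    simp
  calc mgf X μ l ≤ 1 + m / B * (Real.exp (l * B) - 1) := h1.trans h2.le
    _ ≤ Real.exp (m / B * (Real.exp (l * B) - 1)) := by
        linarith [Real.add_one_le_exp (m / B * (Real.exp (l * B) - 1))]

lemma chernoff_core {B v t : ℝ} (hB : 0 < B) (hv : 0 ≤ v) (ht : 0 < t) :
    ∃ l : ℝ, 0 ≤ l ∧
      (v / B ^ 2) * (Real.exp (l * B) - 1 - l * B) - l * (Real.sqrt (2 * t * v) + 2 * B / 3 * t) ≤ -t ∧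
      (v / B ^ 2) * (Real.exp (-(l * B)) - 1 + l * B) - l * (Real.sqrt (2 * t * v) + 2 * B / 3 * t) ≤ -t := by
  set a : ℝ := Real.sqrt (2 * t * v) + 2 * B / 3 * t with ha
  have hs0 : 0 ≤ Real.sqrt (2 * t * v) := Real.sqrt_nonneg _
  have hsq : Real.sqrt (2 * t * v) ^ 2 = 2 * t * v := Real.sq_sqrt (by positivity)
  have ha0 : 0 < a := by positivity
  set d : ℝ := v + a * B / 3 with hd
  have hd0 : 0 < d := by positivity
  set l : ℝ := a / d with hl
  have hl0 : 0 ≤ l := by positivity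
  have hu0 : 0 ≤ l * B := by positivity
  have main : ∀ E : ℝ, (0 < v → E ≤ (l * B) ^ 2 / (2 * (1 - l * B / 3))) →
      (v / B ^ 2) * E - l * a ≤ -t := by
    intro E hE
    rcases eq_or_lt_of_le hv with hv0 | hv0
    · have hveq : v = 0 := hv0.symm
      have hsv : Real.sqrt (2 * t * v) = 0 := by rw [hveq]; simp
      have haval : a = 2 * B / 3 * t := by rw [ha, hsv]; ring
      have hla : l * a = 2 * t := by
        rw [hl, hd, hveq, haval]
        field_simp
        ring
      rw [hveq]
      simp only [zero_div, zero_mul]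
      linarith
    · have hu3 : l * B < 3 := by
        rw [hl, div_mul_eq_mul_div, div_lt_iff₀ hd0, hd]
        nlinarith
      have hfrac : 1 - l * B / 3 = v / d := by
        rw [hl, hd]; field_simp; ring
      have hbound : (v / B ^ 2) * ((l * B) ^ 2 / (2 * (1 - l * B / 3))) = a ^ 2 / (2 * d) := by
        rw [hfrac, hl]
        field_simp
      have hla : l * a = a ^ 2 / d := by rw [hl]; ring
      have hkey : 2 * t * d ≤ a ^ 2 := by
        rw [hd, ha]
        nlinarith [mul_nonneg (mul_nonneg ht.le hB.le) hs0]
      have hK : (0:ℝ) ≤ v / B ^ 2 := by positivity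
      have step := mul_le_mul_of_nonneg_left (hE hv0) hK
      have hneg : a ^ 2 / (2 * d) - a ^ 2 / d = -(a ^ 2 / (2 * d)) := by
        field_simp; ring
      have hta : t ≤ a ^ 2 / (2 * d) := by
        rw [le_div_iff₀ (by positivity)]
        nlinarith [hkey]
      calc (v / B ^ 2) * E - l * a ≤ a ^ 2 / (2 * d) - a ^ 2 / d := by
            rw [← hbound, ← hla] at *; linarith
        _ = -(a ^ 2 / (2 * d)) := hneg
        _ ≤ -t := by linarith
  exact ⟨l, hl0, main _ (fun h => exp_quad_bound hu0 (by
      rw [hl, div_mul_eq_mul_div, div_lt_iff₀ hd0, hd]; nlinarith)),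
    main _ (fun h => exp_neg_quad_bound hu0 (by
      rw [hl, div_mul_eq_mul_div, div_lt_iff₀ hd0, hd]; nlinarith))⟩

lemma algebra_step {B L s x : ℝ} (hB : 0 < B) (hL : 0 < L) (hs : 0 ≤ s) (hx : 0 ≤ x)
    (h : |s - x| ≤ Real.sqrt (2 * (2 * L) * (x * B)) + 2 * B / 3 * (2 * L)) :
    |s - x| ≤ 2 * Real.sqrt (B * s * L) + 7 * B * L := by
  set u : ℝ := Real.sqrt (B * L) with hu
  set q : ℝ := Real.sqrt x with hq
  set r : ℝ := Real.sqrt s with hr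
  have hu0 : 0 ≤ u := Real.sqrt_nonneg _
  have hq0 : 0 ≤ q := Real.sqrt_nonneg _
  have hr0 : 0 ≤ r := Real.sqrt_nonneg _
  have hu2 : u ^ 2 = B * L := Real.sq_sqrt (by positivity)
  have hq2 : q ^ 2 = x := Real.sq_sqrt hx
  have hr2 : r ^ 2 = s := Real.sq_sqrt hs
  have hsqrt1 : Real.sqrt (2 * (2 * L) * (x * B)) = 2 * (u * q) := by
    rw [hu, hq, ← Real.sqrt_mul (by positivity)]
    rw [show 2 * (2 * L) * (x * B) = 2 ^ 2 * (B * L * x) by ring]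
    rw [Real.sqrt_mul (by positivity), Real.sqrt_sq (by norm_num : (0:ℝ) ≤ 2)]
  have hsqrt2 : Real.sqrt (B * s * L) = u * r := by
    rw [hu, hr, ← Real.sqrt_mul (by positivity)]
    congr 1; ring
  rw [hsqrt1] at h
  have hax : |s - x| ≤ 2 * (u * q) + 4 / 3 * u ^ 2 := by rw [hu2]; linarith
  have hqb : q ^ 2 ≤ r ^ 2 + 2 * (u * q) + 4 / 3 * u ^ 2 := by
    have := abs_le.1 hax
    nlinarith [this.1, this.2]
  have hkey : q ≤ r + 8 / 3 * u := by
    by_contra hc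
    push_neg at hc
    have he : 0 < q - r - 8 / 3 * u := by linarith
    nlinarith [sq_nonneg (q - r - 8/3*u), mul_nonneg hr0 hu0,
      mul_nonneg hr0 he.le, mul_nonneg hu0 he.le]
  rw [hsqrt2]
  have : 2 * (u * q) + 4 / 3 * u ^ 2 ≤ 2 * (u * r) + 20 / 3 * u ^ 2 := by
    nlinarith [mul_le_mul_of_nonneg_left hkey hu0]
  have h20 : 20 / 3 * u ^ 2 ≤ 7 * B * L := by rw [hu2]; nlinarith
  linarith

variable {Ω : Type*} {m0 : MeasurableSpace Ω} {μ : Measure Ω} [IsProbabilityMeasure μ]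

lemma tail_prob (X : ℕ → Ω → ℝ) (B m : ℝ) (hB : 0 < B)
    (hmeas : ∀ i, Measurable (X i))
    (hindep : iIndepFun X μ)
    (hmean : ∀ i, ∫ ω, X i ω ∂μ = m)
    (hbdd : ∀ i, ∀ᵐ ω ∂μ, X i ω ∈ Set.Icc (0 : ℝ) B)
    (hm0 : 0 ≤ m)
    (n : ℕ) (t : ℝ) (ht : 0 < t) :
    μ ({ω | n * m + (Real.sqrt (2 * t * (n * m * B)) + 2 * B / 3 * t) ≤ ∑ i ∈ Finset.Icc 1 n, X i ω}
      ∪ {ω | (Real.sqrt (2 * t * (n * m * B)) + 2 * B / 3 * t) - n * m ≤ -∑ i ∈ Finset.Icc 1 n, X i ω})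
      ≤ ENNReal.ofReal (2 * Real.exp (-t)) := by
  set v : ℝ := n * m * B with hv
  have hv0 : 0 ≤ v := by positivity
  set a : ℝ := Real.sqrt (2 * t * v) + 2 * B / 3 * t with ha
  obtain ⟨l, hl0, hch1, hch2⟩ := chernoff_core hB hv0 ht
  -- integrability
  have hint : ∀ l' : ℝ, Integrable (fun ω => Real.exp (l' * (∑ i ∈ Finset.Icc 1 n, X i) ω)) μ := by
    intro l'
    have hSm : Measurable (∑ i ∈ Finset.Icc 1 n, X i) := by
      simpa [Finset.sum_fn] using Finset.measurable_sum (Finset.Icc 1 n) (fun i _ => hmeas i)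
    refine Integrable.mono' (integrable_const (Real.exp (|l'| * (n * B))))
      ((hSm.const_mul l').exp.aestronglyMeasurable) ?_
    have hall : ∀ᵐ ω ∂μ, ∀ i ∈ Finset.Icc 1 n, X i ω ∈ Set.Icc (0:ℝ) B :=
      (ae_ball_iff (Finset.Icc 1 n).countable_toSet).2 (fun i _ => hbdd i)
    filter_upwards [hall] with ω hω
    rw [Real.norm_eq_abs, abs_of_nonneg (Real.exp_pos _).le, Real.exp_le_exp]
    have hSb : (∑ i ∈ Finset.Icc 1 n, X i) ω ≤ n * B := by
      rw [Finset.sum_apply]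
      calc ∑ i ∈ Finset.Icc 1 n, X i ω ≤ ∑ i ∈ Finset.Icc 1 n, B :=
            Finset.sum_le_sum (fun i hi => (hω i hi).2)
        _ = (Finset.Icc 1 n).card * B := by rw [Finset.sum_const, nsmul_eq_mul]
        _ ≤ n * B := by
            have : (Finset.Icc 1 n).card ≤ n := by simp [Nat.card_Icc]
            exact mul_le_mul_of_nonneg_right (by exact_mod_cast this) hB.le
    have hS0 : 0 ≤ (∑ i ∈ Finset.Icc 1 n, X i) ω := by
      rw [Finset.sum_apply]
      exact Finset.sum_nonneg (fun i hi => (hω i hi).1)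
    calc l' * (∑ i ∈ Finset.Icc 1 n, X i) ω ≤ |l'| * (∑ i ∈ Finset.Icc 1 n, X i) ω :=
          mul_le_mul_of_nonneg_right (le_abs_self l') hS0
      _ ≤ |l'| * (n * B) := mul_le_mul_of_nonneg_left hSb (abs_nonneg l')
  -- mgf bound for the sum
  have hmgf : ∀ l' : ℝ, mgf (∑ i ∈ Finset.Icc 1 n, X i) μ l'
      ≤ Real.exp (n * (m / B) * (Real.exp (l' * B) - 1)) := by
    intro l'
    rw [hindep.mgf_sum hmeas]
    calc ∏ i ∈ Finset.Icc 1 n, mgf (X i) μ l'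
        ≤ ∏ i ∈ Finset.Icc 1 n, Real.exp (m / B * (Real.exp (l' * B) - 1)) :=
          Finset.prod_le_prod (fun i _ => mgf_nonneg)
            (fun i _ => bernstein_mgf_single hB (hmeas i) (hmean i) (hbdd i) l')
      _ = Real.exp (m / B * (Real.exp (l' * B) - 1)) ^ (Finset.Icc 1 n).card :=
          Finset.prod_const _
      _ ≤ Real.exp (n * (m / B) * (Real.exp (l' * B) - 1)) := by
          rw [← Real.exp_nat_mul]
          rw [Nat.card_Icc]
          simp only [Nat.add_sub_cancel]
          rw [mul_assoc]
  -- upper tail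
  have hup : (μ {ω | n * m + a ≤ (∑ i ∈ Finset.Icc 1 n, X i) ω}).toReal ≤ Real.exp (-t) := by
    calc (μ {ω | n * m + a ≤ (∑ i ∈ Finset.Icc 1 n, X i) ω}).toReal
        ≤ Real.exp (-l * (n * m + a)) * mgf (∑ i ∈ Finset.Icc 1 n, X i) μ l :=
          measure_ge_le_exp_mul_mgf (n * m + a) hl0 (hint l)
      _ ≤ Real.exp (-l * (n * m + a)) * Real.exp (n * (m / B) * (Real.exp (l * B) - 1)) :=
          mul_le_mul_of_nonneg_left (hmgf l) (Real.exp_pos _).le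
      _ = Real.exp (n * (m / B) * (Real.exp (l * B) - 1) - l * (n * m) - l * a) := by
          rw [← Real.exp_add]; ring_nf
      _ ≤ Real.exp (-t) := by
          rw [Real.exp_le_exp]
          have hid : n * (m / B) * (Real.exp (l * B) - 1) - l * (n * m) - l * a
              = (v / B ^ 2) * (Real.exp (l * B) - 1 - l * B) - l * a := by
            rw [hv]; field_simp
          rw [hid]; exact hch1
  -- lower tail
  have hlow : (μ {ω | a - n * m ≤ (-∑ i ∈ Finset.Icc 1 n, X i) ω}).toReal ≤ Real.exp (-t) := by
    have hintneg : Integrable (fun ω => Real.exp (l * (-∑ i ∈ Finset.Icc 1 n, X i) ω)) μ := by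
      simpa [Pi.neg_apply, mul_neg, neg_mul] using hint (-l)
    calc (μ {ω | a - n * m ≤ (-∑ i ∈ Finset.Icc 1 n, X i) ω}).toReal
        ≤ Real.exp (-l * (a - n * m)) * mgf (-∑ i ∈ Finset.Icc 1 n, X i) μ l :=
          measure_ge_le_exp_mul_mgf (a - n * m) hl0 hintneg
      _ = Real.exp (-l * (a - n * m)) * mgf (∑ i ∈ Finset.Icc 1 n, X i) μ (-l) := by
          rw [mgf_neg]
      _ ≤ Real.exp (-l * (a - n * m)) * Real.exp (n * (m / B) * (Real.exp (-l * B) - 1)) :=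
          mul_le_mul_of_nonneg_left (hmgf (-l)) (Real.exp_pos _).le
      _ = Real.exp (n * (m / B) * (Real.exp (-l * B) - 1) + l * (n * m) - l * a) := by
          rw [← Real.exp_add]; ring_nf
      _ ≤ Real.exp (-t) := by
          rw [Real.exp_le_exp]
          have hid : n * (m / B) * (Real.exp (-l * B) - 1) + l * (n * m) - l * a
              = (v / B ^ 2) * (Real.exp (-(l * B)) - 1 + l * B) - l * a := by
            rw [hv, neg_mul]; field_simp
          rw [hid]; exact hch2
  -- combine
  have h1 : μ {ω | n * m + a ≤ ∑ i ∈ Finset.Icc 1 n, X i ω} ≤ ENNReal.ofReal (Real.exp (-t)) := by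
    rw [← ENNReal.ofReal_toReal (measure_ne_top μ _)]
    apply ENNReal.ofReal_le_ofReal
    have hset : {ω | (n:ℝ) * m + a ≤ ∑ i ∈ Finset.Icc 1 n, X i ω}
        = {ω | (n:ℝ) * m + a ≤ (∑ i ∈ Finset.Icc 1 n, X i) ω} := by
      simp [Finset.sum_apply]
    rw [hset]; exact hup
  have h2 : μ {ω | a - n * m ≤ -∑ i ∈ Finset.Icc 1 n, X i ω} ≤ ENNReal.ofReal (Real.exp (-t)) := by
    rw [← ENNReal.ofReal_toReal (measure_ne_top μ _)]
    apply ENNReal.ofReal_le_ofReal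
    have hset : {ω | a - (n:ℝ) * m ≤ -∑ i ∈ Finset.Icc 1 n, X i ω}
        = {ω | a - (n:ℝ) * m ≤ (-∑ i ∈ Finset.Icc 1 n, X i) ω} := by
      simp [Finset.sum_apply]
    rw [hset]; exact hlow
  calc μ _ ≤ _ + _ := measure_union_le _ _
    _ ≤ ENNReal.ofReal (Real.exp (-t)) + ENNReal.ofReal (Real.exp (-t)) := add_le_add h1 h2
    _ = ENNReal.ofReal (2 * Real.exp (-t)) := by
        rw [← ENNReal.ofReal_add (Real.exp_pos _).le (Real.exp_pos _).le]; ring_nf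

lemma summable_inv_sq : Summable (fun k : ℕ => (1:ℝ) / ((k:ℝ) + 1) ^ 2) := by
  have h : Summable (fun n : ℕ => (1:ℝ) / (n:ℝ) ^ 2) := by
    simpa using Real.summable_one_div_nat_pow.2 (by norm_num : 1 < 2)
  have := (summable_nat_add_iff 1).2 h
  simpa using this

lemma sum_inv_sq_le : ∑' k : ℕ, (1:ℝ) / ((k:ℝ) + 1) ^ 2 ≤ 2 := by
  apply Summable.tsum_le_of_sum_range_le summable_inv_sq
  intro N
  have hterm : ∀ k : ℕ, (1:ℝ) / ((k:ℝ) + 1) ^ 2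
      ≤ 2 * ((1:ℝ) / ((k:ℝ) + 1) - 1 / ((k:ℝ) + 1 + 1)) := by
    intro k
    have hc : (0:ℝ) < (k:ℝ) + 1 := by positivity
    have h1 : 2 * ((1:ℝ) / ((k:ℝ) + 1) - 1 / ((k:ℝ) + 1 + 1))
        = 2 / (((k:ℝ) + 1) * ((k:ℝ) + 2)) := by
      have h2 : ((k:ℝ) + 1) ≠ 0 := by positivity
      have h3 : ((k:ℝ) + 1 + 1) ≠ 0 := by positivity
      rw [div_sub_div _ _ h2 h3, mul_div_assoc']
      have h4 : (1 * ((k:ℝ) + 1 + 1) - ((k:ℝ) + 1) * 1) = 1 := by ring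
      rw [h4, mul_one]
      congr 1
      ring
    rw [h1, div_le_div_iff₀ (by positivity) (by positivity)]
    nlinarith
  calc ∑ k ∈ Finset.range N, (1:ℝ) / ((k:ℝ) + 1) ^ 2
      ≤ ∑ k ∈ Finset.range N, 2 * ((1:ℝ) / ((k:ℝ) + 1) - 1 / ((k:ℝ) + 1 + 1)) :=
        Finset.sum_le_sum (fun k _ => hterm k)
    _ = 2 * ∑ k ∈ Finset.range N, ((fun j : ℕ => (1:ℝ) / ((j:ℝ) + 1)) k
          - (fun j : ℕ => (1:ℝ) / ((j:ℝ) + 1)) (k + 1)) := by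
        rw [Finset.mul_sum]; congr 1; ext k; push_cast; ring
    _ = 2 * ((1:ℝ) / ((0:ℝ) + 1) - 1 / ((N:ℝ) + 1)) := by
        rw [Finset.sum_range_sub' (fun j : ℕ => (1:ℝ) / ((j:ℝ) + 1))]
        norm_num
    _ ≤ 2 := by
        have : (0:ℝ) ≤ 1 / ((N:ℝ) + 1) := by positivity
        norm_num
        linarith

end AnytimeBernsteinAux

/-- Empirical (data-dependent) anytime Bernstein inequality. -/
theorem anytime_bernstein_empirical
    {Ω : Type*} {m0 : MeasurableSpace Ω} {μ : Measure Ω} [IsProbabilityMeasure μ]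
    (X : ℕ → Ω → ℝ) (B m : ℝ) (hB : 0 < B)
    (hmeas : ∀ i, Measurable (X i))
    (hindep : iIndepFun X μ)
    (hident : ∀ i j, IdentDistrib (X i) (X j) μ μ)
    (hmean : ∀ i, ∫ ω, X i ω ∂μ = m)
    (hbdd : ∀ i, ∀ᵐ ω ∂μ, X i ω ∈ Set.Icc (0 : ℝ) B)
    (δ : ℝ) (hδ : δ ∈ Set.Ioo (0 : ℝ) 1) :
    ENNReal.ofReal (1 - δ) ≤
      μ {ω | ∀ n : ℕ, 1 ≤ n →
        |∑ i ∈ Finset.Icc 1 n, (X i ω - m)| ≤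
          2 * Real.sqrt (B * (∑ i ∈ Finset.Icc 1 n, X i ω) * Real.log (2 * n / δ)) +
            7 * B * Real.log (2 * n / δ)} := by
  obtain ⟨hδ0, hδ1⟩ := hδ
  have hm0 : 0 ≤ m := by
    rw [← hmean 0]
    exact integral_nonneg_of_ae ((hbdd 0).mono fun ω h => h.1)
  set L : ℕ → ℝ := fun n => Real.log (2 * n / δ) with hLdef
  have hL : ∀ n : ℕ, 1 ≤ n → 0 < L n := by
    intro n hn
    apply Real.log_pos
    rw [lt_div_iff₀ hδ0]
    have h1 : (1:ℝ) ≤ n := by exact_mod_cast hn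
    nlinarith
  set a : ℕ → ℝ := fun n =>
    Real.sqrt (2 * (2 * L n) * ((n:ℝ) * m * B)) + 2 * B / 3 * (2 * L n) with hadef
  set bad : ℕ → Set Ω := fun k =>
    {ω | ((k:ℝ) + 1) * m + a (k+1) ≤ ∑ i ∈ Finset.Icc 1 (k+1), X i ω}
    ∪ {ω | a (k+1) - ((k:ℝ) + 1) * m ≤ -∑ i ∈ Finset.Icc 1 (k+1), X i ω} with hbaddef
  -- per index bound
  have hbadm : ∀ k : ℕ, μ (bad k) ≤ ENNReal.ofReal (δ^2 / (2 * ((k:ℝ) + 1)^2)) := by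
    intro k
    have hLk : 0 < L (k+1) := hL (k+1) (Nat.le_add_left 1 k)
    have ht : 0 < 2 * L (k+1) := by linarith
    have htp := tail_prob X B m hB hmeas hindep hmean hbdd hm0 (k+1) (2 * L (k+1)) ht
    have hcast : ((k+1 : ℕ) : ℝ) = (k:ℝ) + 1 := by push_cast; ring
    have hseteq : bad k =
      ({ω | ((k+1:ℕ):ℝ) * m + (Real.sqrt (2 * (2 * L (k+1)) * (((k+1:ℕ):ℝ) * m * B)) + 2 * B / 3 * (2 * L (k+1))) ≤ ∑ i ∈ Finset.Icc 1 (k+1), X i ω}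
      ∪ {ω | (Real.sqrt (2 * (2 * L (k+1)) * (((k+1:ℕ):ℝ) * m * B)) + 2 * B / 3 * (2 * L (k+1))) - ((k+1:ℕ):ℝ) * m ≤ -∑ i ∈ Finset.Icc 1 (k+1), X i ω}) := by
      simp only [hbaddef, hadef, hcast]
    rw [hseteq]
    refine htp.trans (ENNReal.ofReal_le_ofReal ?_)
    have hy : Real.exp (L (k+1)) = 2 * ((k:ℝ)+1) / δ := by
      rw [hLdef]
      rw [Real.exp_log (by positivity)]
      push_cast; ring
    have hexp : Real.exp (-(2 * L (k+1))) = (δ / (2 * ((k:ℝ)+1)))^2 := by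
      rw [show -(2 * L (k+1)) = -L (k+1) + -L (k+1) by ring, Real.exp_add, Real.exp_neg, hy]
      rw [div_pow]
      field_simp
    have heq2 : 2 * (δ / (2 * ((k:ℝ)+1)))^2 = δ^2 / (2*((k:ℝ)+1)^2) := by
      rw [div_pow]
      field_simp
    rw [hexp, heq2]
  -- union bound
  set A : Set Ω := ⋃ k, bad k with hA
  have hAle : μ A ≤ ENNReal.ofReal δ := by
    have hsum' : Summable (fun k : ℕ => δ^2 / (2 * ((k:ℝ) + 1)^2)) := by
      have heq : (fun k : ℕ => δ^2 / (2 * ((k:ℝ) + 1)^2))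
          = fun k : ℕ => (δ^2/2) * ((1:ℝ) / ((k:ℝ) + 1)^2) := by
        funext k; rw [eq_comm, div_mul_div_comm, mul_one]
      rw [heq]
      exact summable_inv_sq.mul_left _
    calc μ A ≤ ∑' k : ℕ, μ (bad k) := measure_iUnion_le _
      _ ≤ ∑' k : ℕ, ENNReal.ofReal (δ^2 / (2 * ((k:ℝ) + 1)^2)) := ENNReal.tsum_le_tsum hbadm
      _ = ENNReal.ofReal (∑' k : ℕ, δ^2 / (2 * ((k:ℝ) + 1)^2)) :=
          (ENNReal.ofReal_tsum_of_nonneg (fun k => by positivity) hsum').symm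
      _ ≤ ENNReal.ofReal δ := by
          apply ENNReal.ofReal_le_ofReal
          have heq : (fun k : ℕ => δ^2 / (2 * ((k:ℝ) + 1)^2))
              = fun k : ℕ => (δ^2/2) * ((1:ℝ) / ((k:ℝ) + 1)^2) := by
            funext k; rw [eq_comm, div_mul_div_comm, mul_one]
          rw [heq, tsum_mul_left]
          have h2 := sum_inv_sq_le
          have h3 : (0:ℝ) ≤ δ^2/2 := by positivity
          nlinarith [mul_le_mul_of_nonneg_left h2 h3]
  -- good set inclusion
  set G : Set Ω := {ω | ∀ i, X i ω ∈ Set.Icc (0:ℝ) B} with hG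
  have hincl : Aᶜ ∩ G ⊆ {ω | ∀ n : ℕ, 1 ≤ n →
      |∑ i ∈ Finset.Icc 1 n, (X i ω - m)| ≤
        2 * Real.sqrt (B * (∑ i ∈ Finset.Icc 1 n, X i ω) * Real.log (2 * n / δ)) +
          7 * B * Real.log (2 * n / δ)} := by
    rintro ω ⟨hωA, hωG⟩ n hn
    have hk : ω ∉ bad (n-1) := fun h => hωA (Set.mem_iUnion.2 ⟨n-1, h⟩)
    have hn1 : n - 1 + 1 = n := Nat.succ_pred_eq_of_pos hn
    have hcast : ((n-1 : ℕ) : ℝ) + 1 = (n:ℝ) := by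
      rw [Nat.cast_sub hn, Nat.cast_one]; ring
    rw [hbaddef] at hk
    simp only [Set.mem_union, Set.mem_setOf_eq, hn1, hcast, not_or, not_le] at hk
    obtain ⟨hk1, hk2⟩ := hk
    set s : ℝ := ∑ i ∈ Finset.Icc 1 n, X i ω with hs
    set x : ℝ := (n:ℝ) * m with hx
    have habs : |s - x| ≤ a n := by
      rw [abs_le]
      constructor
      · linarith [hk2]
      · linarith [hk1]
    have hs0 : 0 ≤ s := Finset.sum_nonneg (fun i _ => (hωG i).1)
    have hx0 : 0 ≤ x := by positivity
    have hLn : 0 < L n := hL n hn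
    have hsum_eq : ∑ i ∈ Finset.Icc 1 n, (X i ω - m) = s - x := by
      rw [Finset.sum_sub_distrib, Finset.sum_const, Nat.card_Icc]
      simp only [Nat.add_sub_cancel, nsmul_eq_mul]
      rfl
    rw [hsum_eq]
    have := algebra_step hB hLn hs0 hx0 (by
      rw [hadef] at habs
      exact habs)
    exact this
  -- final measure computation
  have hGc : μ Gᶜ = 0 := by
    have hae : ∀ᵐ ω ∂μ, ∀ i, X i ω ∈ Set.Icc (0:ℝ) B := ae_all_iff.2 hbdd
    rw [hG]
    rw [Set.compl_setOf]
    exact hae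
  have h5 : μ Aᶜ ≤ μ (Aᶜ ∩ G) := by
    calc μ Aᶜ = μ ((Aᶜ ∩ G) ∪ (Aᶜ ∩ Gᶜ)) := by rw [Set.inter_union_compl]
      _ ≤ μ (Aᶜ ∩ G) + μ (Aᶜ ∩ Gᶜ) := measure_union_le _ _
      _ ≤ μ (Aᶜ ∩ G) + μ Gᶜ := by
          exact add_le_add_right (measure_mono Set.inter_subset_right) _
      _ = μ (Aᶜ ∩ G) := by rw [hGc, add_zero]
  have h6 : (1:ENNReal) ≤ μ A + μ Aᶜ := by
    calc (1:ENNReal) = μ Set.univ := (measure_univ (μ := μ)).symm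
      _ = μ (A ∪ Aᶜ) := by rw [Set.union_compl_self]
      _ ≤ μ A + μ Aᶜ := measure_union_le _ _
  have h7 : ENNReal.ofReal (1 - δ) ≤ μ Aᶜ := by
    rw [show ENNReal.ofReal (1 - δ) = ENNReal.ofReal 1 - ENNReal.ofReal δ from
      ENNReal.ofReal_sub 1 hδ0.le, ENNReal.ofReal_one]
    rw [tsub_le_iff_right]
    calc (1:ENNReal) ≤ μ A + μ Aᶜ := h6
      _ ≤ ENNReal.ofReal δ + μ Aᶜ := add_le_add_left hAle _
      _ = μ Aᶜ + ENNReal.ofReal δ := add_comm _ _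
  exact h7.trans (h5.trans (measure_mono hincl))
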